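/- In the Hecke ring R(Γ̃,Δ̃) of the twisted pair attached to GSp_{2n} (Γ̃ = GSp_{2n}(ℤ_p) × ℤ_p^{2n}, Δ̃ = (GSp_{2n}(ℚ_p) ∩ M_{2n}(ℤ_p)) × ℤ_p^{2n} with twisted product), let T̃(p^k) denote the sum of all double coset basis elements T̃(Γ̃(A,a)Γ̃) with v_p(μ(A)) = k. Then for 0 < k < l, the elements T̃(p^k) and T̃(p^l) do not commute: T̃(p^k)T̃(p^l) ≠ T̃(p^l)T̃(p^k). -/

import Mathlib

/-! STATEMENT 19: in the Hecke ring of the twisted pair attached to `GSp_{2n}` over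
`ℤ_p` (the local Hecke ring of the Heisenberg Lie algebra of dimension `2n+1`), the
elements `T̃(p^k)` and `T̃(p^l)` do not commute for `0 < k < l`. The Hecke ring is
axiomatized as a ring with ℤ-basis the double cosets, multiplication given by the
standard structure constants, and `T̃(p^m)` the (finite) sum of the basis elements
with `v_p(μ(A)) = m`. -/

open Matrix

variable (p : ℕ) [Fact p.Prime] (n : ℕ)

/-- Coordinates of `ℚ_p^{2n}`. -/
abbrev Idx (n : ℕ) := Fin (n + 1) ⊕ Fin (n + 1)

/-- The standard symplectic form. -/
noncomputable def Jmat : Matrix (Idx n) (Idx n) ℚ_[p] :=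
  Matrix.fromBlocks 0 1 (-1) 0

/-- The similitude multiplier `μ(A)`, read off from `Aᵀ J A = μ J` at the entry
where `J` equals `1`. -/
noncomputable def simil (A : Matrix (Idx n) (Idx n) ℚ_[p]) : ℚ_[p] :=
  (Aᵀ * Jmat p n * A) (Sum.inl 0) (Sum.inr 0)

/-- `GSp_{2n}(ℚ_p)`. -/
def GSpQ : Set (Matrix (Idx n) (Idx n) ℚ_[p]) :=
  {A | ∃ μ : ℚ_[p], μ ≠ 0 ∧ Aᵀ * Jmat p n * A = μ • Jmat p n}

/-- `Γ = GSp_{2n}(ℤ_p)`. -/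
def GSpZ : Set (Matrix (Idx n) (Idx n) ℚ_[p]) :=
  {A | A ∈ GSpQ p n ∧ (∀ i j, ‖A i j‖ ≤ 1) ∧ ‖A.det‖ = 1}

/-- `Γ̃ = Γ × ℤ_p^{2n}`. -/
def GammaT : Set (Matrix (Idx n) (Idx n) ℚ_[p] × (Idx n → ℚ_[p])) :=
  {x | x.1 ∈ GSpZ p n ∧ ∀ i, ‖x.2 i‖ ≤ 1}

/-- `Δ̃`: integral twisted elements. -/
def DeltaT : Set (Matrix (Idx n) (Idx n) ℚ_[p] × (Idx n → ℚ_[p])) :=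
  {x | x.1 ∈ GSpQ p n ∧ (∀ i j, ‖x.1 i j‖ ≤ 1) ∧ ∀ i, ‖x.2 i‖ ≤ 1}

/-- `Δ̃_{p^m}`: elements of `Δ̃` with `v_p(μ) = m`. -/
def DeltaTval (m : ℕ) : Set (Matrix (Idx n) (Idx n) ℚ_[p] × (Idx n → ℚ_[p])) :=
  {x | x ∈ DeltaT p n ∧ ∃ μ : ℚ_[p], μ ≠ 0 ∧
    x.1ᵀ * Jmat p n * x.1 = μ • Jmat p n ∧ μ.valuation = (m : ℤ)}

/-- The twisted product `(A,a)(B,b) = (AB, Ab + μ(B)a)`. -/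
noncomputable def tmulG (x y : Matrix (Idx n) (Idx n) ℚ_[p] × (Idx n → ℚ_[p])) :
    Matrix (Idx n) (Idx n) ℚ_[p] × (Idx n → ℚ_[p]) :=
  (x.1 * y.1, x.1.mulVec y.2 + simil p n y.1 • x.2)

/-- The twisted inverse `(X,x)⁻¹ = (X⁻¹, -μ(X)⁻¹ X⁻¹ x)`. -/
noncomputable def tinvG (x : Matrix (Idx n) (Idx n) ℚ_[p] × (Idx n → ℚ_[p])) :
    Matrix (Idx n) (Idx n) ℚ_[p] × (Idx n → ℚ_[p]) :=
  (x.1⁻¹, -((simil p n x.1)⁻¹ • x.1⁻¹.mulVec x.2))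

/-- Left coset `Γ̃ x`. -/
noncomputable def tlcG (x : Matrix (Idx n) (Idx n) ℚ_[p] × (Idx n → ℚ_[p])) :
    Set (Matrix (Idx n) (Idx n) ℚ_[p] × (Idx n → ℚ_[p])) :=
  {z | ∃ g ∈ GammaT p n, z = tmulG p n g x}

/-- Double coset `Γ̃ x Γ̃`. -/
noncomputable def tdcG (x : Matrix (Idx n) (Idx n) ℚ_[p] × (Idx n → ℚ_[p])) :
    Set (Matrix (Idx n) (Idx n) ℚ_[p] × (Idx n → ℚ_[p])) :=
  {z | ∃ g ∈ GammaT p n, ∃ h ∈ GammaT p n, z = tmulG p n (tmulG p n g x) h}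

/-- Structure constants of the twisted Hecke ring. -/
noncomputable def mTG (α β ζ : Matrix (Idx n) (Idx n) ℚ_[p] × (Idx n → ℚ_[p])) : ℕ :=
  Nat.card {S : Set (Matrix (Idx n) (Idx n) ℚ_[p] × (Idx n → ℚ_[p])) |
    ∃ d ∈ tdcG p n β, tmulG p n ζ (tinvG p n d) ∈ tdcG p n α ∧ S = tlcG p n d}


section HkAux

def HkIsSim (p : ℕ) [Fact p.Prime] (n : ℕ)
    (A : Matrix (Idx n) (Idx n) ℚ_[p]) (μ : ℚ_[p]) : Prop :=
  Aᵀ * Jmat p n * A = μ • Jmat p n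

abbrev HkEl (p : ℕ) [Fact p.Prime] (n : ℕ) :=
  Matrix (Idx n) (Idx n) ℚ_[p] × (Idx n → ℚ_[p])

noncomputable def hkE (p : ℕ) [Fact p.Prime] (n : ℕ) : HkEl p n := (1, 0)

def HkReg (p : ℕ) [Fact p.Prime] (n : ℕ) (x : HkEl p n) : Prop :=
  ∃ μ : ℚ_[p], μ ≠ 0 ∧ HkIsSim p n x.1 μ

variable {p n}

lemma Jmat_inl_inr : Jmat p n (Sum.inl 0) (Sum.inr 0) = 1 := by
  simp [Jmat, fromBlocks]

lemma Jmat_norm_le (i j : Idx n) : ‖Jmat p n i j‖ ≤ 1 := by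
  rcases i with i | i <;> rcases j with j | j <;>
    simp [Jmat, fromBlocks, Matrix.one_apply] <;> split <;> simp

lemma Jmat_mul_Jmat : Jmat p n * Jmat p n = -1 := by
  simp [Jmat, fromBlocks_multiply]
  rw [← fromBlocks_one]
  rw [fromBlocks_neg]
  simp

lemma negJmat_mul_Jmat : (-Jmat p n) * Jmat p n = 1 := by
  rw [Matrix.neg_mul, Jmat_mul_Jmat, neg_neg]

lemma hkIsSim_simil {A : Matrix (Idx n) (Idx n) ℚ_[p]} {μ : ℚ_[p]}
    (h : HkIsSim p n A μ) : simil p n A = μ := by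
  rw [simil, h, Matrix.smul_apply, Jmat_inl_inr, smul_eq_mul, mul_one]

lemma hkIsSim_one : HkIsSim p n 1 1 := by
  simp [HkIsSim]

lemma hkIsSim_mul {A B : Matrix (Idx n) (Idx n) ℚ_[p]} {μ ν : ℚ_[p]}
    (hA : HkIsSim p n A μ) (hB : HkIsSim p n B ν) : HkIsSim p n (A * B) (μ * ν) := by
  unfold HkIsSim at *
  rw [Matrix.transpose_mul]
  calc Bᵀ * Aᵀ * Jmat p n * (A * B) = Bᵀ * (Aᵀ * Jmat p n * A) * B := by
        noncomm_ring
    _ = μ • (Bᵀ * Jmat p n * B) := by rw [hA]; simp [Matrix.mul_smul, Matrix.smul_mul]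
    _ = (μ * ν) • Jmat p n := by rw [hB, smul_smul]

lemma hkIsSim_leftInv {A : Matrix (Idx n) (Idx n) ℚ_[p]} {μ : ℚ_[p]}
    (hA : HkIsSim p n A μ) (hμ : μ ≠ 0) :
    (μ⁻¹ • ((-Jmat p n) * Aᵀ * Jmat p n)) * A = 1 := by
  have h : (-Jmat p n) * (Aᵀ * (Jmat p n * A)) = μ • 1 := by
    rw [← Matrix.mul_assoc Aᵀ, hA, Matrix.mul_smul, negJmat_mul_Jmat]
  rw [Matrix.smul_mul, Matrix.mul_assoc, Matrix.mul_assoc, h, smul_smul,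
    inv_mul_cancel₀ hμ, one_smul]

lemma hkIsSim_inv_eq {A : Matrix (Idx n) (Idx n) ℚ_[p]} {μ : ℚ_[p]}
    (hA : HkIsSim p n A μ) (hμ : μ ≠ 0) :
    A⁻¹ = μ⁻¹ • ((-Jmat p n) * Aᵀ * Jmat p n) :=
  Matrix.inv_eq_left_inv (hkIsSim_leftInv hA hμ)

lemma hkIsSim_inv_mul {A : Matrix (Idx n) (Idx n) ℚ_[p]} {μ : ℚ_[p]}
    (hA : HkIsSim p n A μ) (hμ : μ ≠ 0) : A⁻¹ * A = 1 := by
  rw [hkIsSim_inv_eq hA hμ]; exact hkIsSim_leftInv hA hμ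

lemma hkIsSim_mul_inv {A : Matrix (Idx n) (Idx n) ℚ_[p]} {μ : ℚ_[p]}
    (hA : HkIsSim p n A μ) (hμ : μ ≠ 0) : A * A⁻¹ = 1 :=
  mul_eq_one_comm.mpr (hkIsSim_inv_mul hA hμ)

lemma hkIsSim_inv {A : Matrix (Idx n) (Idx n) ℚ_[p]} {μ : ℚ_[p]}
    (hA : HkIsSim p n A μ) (hμ : μ ≠ 0) : HkIsSim p n A⁻¹ μ⁻¹ := by
  unfold HkIsSim at *
  have h1 : Aᵀ * (Jmat p n * A) = μ • Jmat p n := by rw [← Matrix.mul_assoc]; exact hA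
  have h2 : (A⁻¹)ᵀ * Aᵀ = 1 := by
    rw [← Matrix.transpose_mul, hkIsSim_mul_inv hA hμ, Matrix.transpose_one]
  calc (A⁻¹)ᵀ * Jmat p n * A⁻¹
      = (A⁻¹)ᵀ * (μ⁻¹ • (Aᵀ * (Jmat p n * A))) * A⁻¹ := by
        rw [h1, smul_smul, inv_mul_cancel₀ hμ, one_smul]
    _ = μ⁻¹ • (((A⁻¹)ᵀ * Aᵀ) * ((Jmat p n * A) * A⁻¹)) := by
        simp [Matrix.mul_smul, Matrix.smul_mul, Matrix.mul_assoc]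
    _ = μ⁻¹ • Jmat p n := by
        rw [h2, Matrix.mul_assoc, hkIsSim_mul_inv hA hμ, Matrix.one_mul, Matrix.mul_one]

lemma padic_norm_sum_le {ι : Type*} (s : Finset ι) (f : ι → ℚ_[p]) {c : ℝ} (hc : 0 ≤ c)
    (h : ∀ i ∈ s, ‖f i‖ ≤ c) : ‖∑ i ∈ s, f i‖ ≤ c := by
  classical
  induction s using Finset.cons_induction with
  | empty => simpa using hc
  | cons a s ha ih =>
      rw [Finset.sum_cons]
      exact le_trans (Padic.nonarchimedean _ _)
        (sup_le (h a (Finset.mem_cons_self a s))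
          (ih fun i hi => h i (Finset.mem_cons_of_mem hi)))

lemma mul_entry_norm_le {A B : Matrix (Idx n) (Idx n) ℚ_[p]} {a b : ℝ}
    (ha : 0 ≤ a) (hb : 0 ≤ b) (hA : ∀ i j, ‖A i j‖ ≤ a) (hB : ∀ i j, ‖B i j‖ ≤ b)
    (i j : Idx n) : ‖(A * B) i j‖ ≤ a * b := by
  rw [Matrix.mul_apply]
  exact padic_norm_sum_le _ _ (mul_nonneg ha hb)
    (fun t _ => by rw [norm_mul]; exact mul_le_mul (hA i t) (hB t j) (norm_nonneg _) ha)

lemma mulVec_entry_norm_le {A : Matrix (Idx n) (Idx n) ℚ_[p]} {v : Idx n → ℚ_[p]} {a b : ℝ}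
    (ha : 0 ≤ a) (hb : 0 ≤ b) (hA : ∀ i j, ‖A i j‖ ≤ a) (hv : ∀ i, ‖v i‖ ≤ b)
    (i : Idx n) : ‖A.mulVec v i‖ ≤ a * b := by
  rw [Matrix.mulVec, dotProduct]
  exact padic_norm_sum_le _ _ (mul_nonneg ha hb)
    (fun t _ => by rw [norm_mul]; exact mul_le_mul (hA i t) (hv t) (norm_nonneg _) ha)


lemma simil_one : simil p n 1 = 1 := hkIsSim_simil hkIsSim_one

lemma tmulG_e (x : HkEl p n) : tmulG p n x (hkE p n) = x := by
  unfold tmulG hkE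
  simp [simil_one]

lemma e_tmulG (x : HkEl p n) : tmulG p n (hkE p n) x = x := by
  unfold tmulG hkE
  simp

lemma simil_mul {x y : Matrix (Idx n) (Idx n) ℚ_[p]}
    (hx : ∃ μ : ℚ_[p], μ ≠ 0 ∧ HkIsSim p n x μ)
    (hy : ∃ μ : ℚ_[p], μ ≠ 0 ∧ HkIsSim p n y μ) :
    simil p n (x * y) = simil p n x * simil p n y := by
  obtain ⟨μ, -, hμ⟩ := hx
  obtain ⟨ν, -, hν⟩ := hy
  rw [hkIsSim_simil hμ, hkIsSim_simil hν, hkIsSim_simil (hkIsSim_mul hμ hν)]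

lemma tmulG_assoc (x y z : HkEl p n) (hy : HkReg p n y) (hz : HkReg p n z) :
    tmulG p n (tmulG p n x y) z = tmulG p n x (tmulG p n y z) := by
  unfold tmulG
  refine Prod.ext (Matrix.mul_assoc _ _ _) ?_
  dsimp only
  rw [simil_mul hy hz, Matrix.mulVec_add, Matrix.mulVec_mulVec, Matrix.mulVec_smul,
    smul_add, smul_smul, mul_comm (simil p n y.1), add_assoc]

lemma hkReg_e : HkReg p n (hkE p n) := ⟨1, one_ne_zero, hkIsSim_one⟩

lemma hkReg_mul {x y : HkEl p n} (hx : HkReg p n x) (hy : HkReg p n y) :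
    HkReg p n (tmulG p n x y) := by
  obtain ⟨μ, hμ0, hμ⟩ := hx
  obtain ⟨ν, hν0, hν⟩ := hy
  exact ⟨μ * ν, mul_ne_zero hμ0 hν0, hkIsSim_mul hμ hν⟩

lemma tmulG_tinvG {x : HkEl p n} (hx : HkReg p n x) :
    tmulG p n x (tinvG p n x) = hkE p n := by
  obtain ⟨μ, hμ0, hμ⟩ := hx
  have hsim := hkIsSim_simil hμ
  have hinv : simil p n x.1⁻¹ = μ⁻¹ := hkIsSim_simil (hkIsSim_inv hμ hμ0)
  unfold tmulG tinvG hkE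
  refine Prod.ext (hkIsSim_mul_inv hμ hμ0) ?_
  dsimp only
  rw [hinv, hsim, Matrix.mulVec_neg, Matrix.mulVec_smul, Matrix.mulVec_mulVec,
    hkIsSim_mul_inv hμ hμ0, Matrix.one_mulVec]
  simp [smul_smul, inv_mul_cancel₀ hμ0]

lemma tinvG_tmulG {x : HkEl p n} (hx : HkReg p n x) :
    tmulG p n (tinvG p n x) x = hkE p n := by
  obtain ⟨μ, hμ0, hμ⟩ := hx
  have hsim := hkIsSim_simil hμ
  unfold tmulG tinvG hkE
  refine Prod.ext (hkIsSim_inv_mul hμ hμ0) ?_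
  dsimp only
  rw [hsim]
  simp [smul_smul, mul_inv_cancel₀ hμ0, Matrix.mulVec_smul]

lemma hkReg_tinvG {x : HkEl p n} (hx : HkReg p n x) : HkReg p n (tinvG p n x) := by
  obtain ⟨μ, hμ0, hμ⟩ := hx
  exact ⟨μ⁻¹, inv_ne_zero hμ0, hkIsSim_inv hμ hμ0⟩

/-- cancel: `(a ⬝ d) ⬝ d⁻¹ = a`. -/
lemma tmulG_mul_tinvG_cancel (a d : HkEl p n) (hd : HkReg p n d) :
    tmulG p n (tmulG p n a d) (tinvG p n d) = a := by
  rw [tmulG_assoc a d (tinvG p n d) hd (hkReg_tinvG hd), tmulG_tinvG hd, tmulG_e]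

lemma tmulG_tinvG_mul_cancel (a d : HkEl p n) (hd : HkReg p n d) :
    tmulG p n (tmulG p n a (tinvG p n d)) d = a := by
  rw [tmulG_assoc a (tinvG p n d) d (hkReg_tinvG hd) hd, tinvG_tmulG hd, tmulG_e]


lemma real_pow_eq_one {x : ℝ} {m : ℕ} (h0 : 0 ≤ x) (hm : m ≠ 0) (h : x ^ m = 1) : x = 1 := by
  rcases lt_trichotomy x 1 with h1 | h1 | h1
  · have := pow_lt_one₀ h0 h1 hm
    rw [h] at this; exact absurd this (lt_irrefl 1)
  · exact h1
  · have := one_lt_pow₀ h1 hm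
    rw [h] at this; exact absurd this (lt_irrefl 1)

lemma Jmat_det_ne_zero : (Jmat p n).det ≠ 0 := by
  intro h
  have h2 : (Jmat p n).det * (Jmat p n).det = (-1 : Matrix (Idx n) (Idx n) ℚ_[p]).det := by
    rw [← Matrix.det_mul, Jmat_mul_Jmat]
  have h3 : ((-1 : Matrix (Idx n) (Idx n) ℚ_[p])).det = (-1 : ℚ_[p]) ^ (Fintype.card (Idx n)) := by
    rw [← neg_one_smul ℚ_[p] (1 : Matrix (Idx n) (Idx n) ℚ_[p]), Matrix.det_smul,
      Matrix.det_one, mul_one]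
  rw [h, mul_zero] at h2
  have : ((-1 : ℚ_[p]) ^ (Fintype.card (Idx n))) ≠ 0 := pow_ne_zero _ (by norm_num)
  exact this (by rw [← h3, ← h2])

lemma hkIsSim_det_sq {A : Matrix (Idx n) (Idx n) ℚ_[p]} {μ : ℚ_[p]}
    (hA : HkIsSim p n A μ) : A.det ^ 2 = μ ^ (Fintype.card (Idx n)) := by
  have h := congrArg Matrix.det hA
  rw [Matrix.det_mul, Matrix.det_mul, Matrix.det_transpose, Matrix.det_smul] at h
  have h2 : (A.det ^ 2) * (Jmat p n).det = (μ ^ (Fintype.card (Idx n))) * (Jmat p n).det := by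
    rw [pow_two]; linear_combination h
  exact mul_right_cancel₀ Jmat_det_ne_zero h2

lemma norm_pow_card {A : Matrix (Idx n) (Idx n) ℚ_[p]} {μ : ℚ_[p]}
    (hA : HkIsSim p n A μ) : ‖A.det‖ ^ 2 = ‖μ‖ ^ (Fintype.card (Idx n)) := by
  rw [← norm_pow, ← norm_pow, hkIsSim_det_sq hA]

lemma norm_simil_eq_one {A : Matrix (Idx n) (Idx n) ℚ_[p]} {μ : ℚ_[p]}
    (hA : HkIsSim p n A μ) (hdet : ‖A.det‖ = 1) : ‖μ‖ = 1 := by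
  have h := norm_pow_card hA
  rw [hdet, one_pow] at h
  exact real_pow_eq_one (norm_nonneg μ) Fintype.card_ne_zero h.symm

lemma mem_GSpQ_iff {A : Matrix (Idx n) (Idx n) ℚ_[p]} :
    A ∈ GSpQ p n ↔ ∃ μ : ℚ_[p], μ ≠ 0 ∧ HkIsSim p n A μ := Iff.rfl

lemma GSpZ_isSim {A : Matrix (Idx n) (Idx n) ℚ_[p]} (hA : A ∈ GSpZ p n) :
    ∃ μ : ℚ_[p], μ ≠ 0 ∧ HkIsSim p n A μ ∧ ‖μ‖ = 1 := by
  obtain ⟨⟨μ, hμ0, hμ⟩, hint, hdet⟩ := hA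
  exact ⟨μ, hμ0, hμ, norm_simil_eq_one hμ hdet⟩

lemma padic_norm_of_val {x : ℚ_[p]} {m : ℕ} (hx : x ≠ 0) (hv : x.valuation = (m : ℤ)) :
    ‖x‖ = (p : ℝ) ^ (-(m : ℤ)) := by
  rw [Padic.norm_eq_zpow_neg_valuation hx, hv]

lemma one_lt_p_real : (1 : ℝ) < (p : ℝ) := by
  exact_mod_cast (Fact.out : p.Prime).one_lt

lemma padic_val_zero_of_norm_one {x : ℚ_[p]} (hx : x ≠ 0) (h : ‖x‖ = 1) :
    x.valuation = 0 := by
  have h2 : (p : ℝ) ^ (-x.valuation) = (p : ℝ) ^ (0 : ℤ) := by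
    rw [← Padic.norm_eq_zpow_neg_valuation hx, h, zpow_zero]
  have h3 := zpow_right_injective₀ (by linarith [one_lt_p_real (p := p)])
    (by linarith [one_lt_p_real (p := p)]) h2
  omega

lemma padic_norm_le_one_of_val {x : ℚ_[p]} {m : ℕ} (hx : x ≠ 0) (hv : x.valuation = (m : ℤ)) :
    ‖x‖ ≤ 1 := by
  rw [padic_norm_of_val hx hv]
  exact zpow_le_one_of_nonpos₀ (le_of_lt one_lt_p_real) (by omega)

lemma hkE_mem_GammaT : hkE p n ∈ GammaT p n := by
  refine ⟨⟨⟨1, one_ne_zero, hkIsSim_one⟩, ?_, ?_⟩, ?_⟩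
  · intro i j
    rcases eq_or_ne i j with h | h <;> simp [Matrix.one_apply, h, hkE]
  · simp [hkE]
  · intro i; simp [hkE]

lemma GammaT_reg {g : HkEl p n} (hg : g ∈ GammaT p n) : HkReg p n g := by
  obtain ⟨μ, hμ0, hμ, -⟩ := GSpZ_isSim hg.1
  exact ⟨μ, hμ0, hμ⟩

lemma GammaT_mul {g h : HkEl p n} (hg : g ∈ GammaT p n) (hh : h ∈ GammaT p n) :
    tmulG p n g h ∈ GammaT p n := by
  obtain ⟨⟨hgQ, hgI, hgD⟩, hgv⟩ := hg
  obtain ⟨⟨hhQ, hhI, hhD⟩, hhv⟩ := hh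
  obtain ⟨μ, hμ0, hμ⟩ := hgQ
  obtain ⟨ν, hν0, hν⟩ := hhQ
  have hνn : ‖ν‖ = 1 := norm_simil_eq_one hν hhD
  refine ⟨⟨⟨μ * ν, mul_ne_zero hμ0 hν0, hkIsSim_mul hμ hν⟩, ?_, ?_⟩, ?_⟩
  · intro i j
    simpa [tmulG] using mul_entry_norm_le zero_le_one zero_le_one hgI hhI i j
  · show ‖(g.1 * h.1).det‖ = 1
    rw [Matrix.det_mul, norm_mul, hgD, hhD, mul_one]
  · intro i
    show ‖(g.1.mulVec h.2 + simil p n h.1 • g.2) i‖ ≤ 1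
    rw [Pi.add_apply]
    refine le_trans (Padic.nonarchimedean _ _) (sup_le ?_ ?_)
    · simpa using mulVec_entry_norm_le zero_le_one zero_le_one hgI hhv i
    · rw [Pi.smul_apply, smul_eq_mul, norm_mul, hkIsSim_simil hν, hνn, one_mul]
      exact hgv i

lemma GSpZ_inv_int {g : HkEl p n} (hg : g ∈ GammaT p n) (i j : Idx n) :
    ‖(g.1)⁻¹ i j‖ ≤ 1 := by
  obtain ⟨⟨hgQ, hgI, hgD⟩, hgv⟩ := hg
  obtain ⟨μ, hμ0, hμ⟩ := hgQ
  have hμn : ‖μ‖ = 1 := norm_simil_eq_one hμ hgD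
  rw [hkIsSim_inv_eq hμ hμ0, Matrix.smul_apply, smul_eq_mul, norm_mul, norm_inv, hμn, inv_one,
    one_mul]
  have h1 : ∀ i j, ‖(-Jmat p n) i j‖ ≤ 1 := by
    intro i j; rw [Matrix.neg_apply, norm_neg]; exact Jmat_norm_le i j
  have h2 : ∀ i j, ‖(g.1)ᵀ i j‖ ≤ 1 := fun i j => hgI j i
  simpa using mul_entry_norm_le (mul_nonneg zero_le_one zero_le_one) zero_le_one
    (fun i j => by simpa using mul_entry_norm_le zero_le_one zero_le_one h1 h2 i j)
    (fun i j => Jmat_norm_le i j) i j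

lemma GammaT_tinv {g : HkEl p n} (hg : g ∈ GammaT p n) : tinvG p n g ∈ GammaT p n := by
  have hinv := GSpZ_inv_int hg
  obtain ⟨⟨hgQ, hgI, hgD⟩, hgv⟩ := hg
  obtain ⟨μ, hμ0, hμ⟩ := hgQ
  have hμn : ‖μ‖ = 1 := norm_simil_eq_one hμ hgD
  refine ⟨⟨⟨μ⁻¹, inv_ne_zero hμ0, hkIsSim_inv hμ hμ0⟩, hinv, ?_⟩, ?_⟩
  · show ‖(g.1⁻¹).det‖ = 1
    rw [Matrix.det_nonsing_inv, Ring.inverse_eq_inv, norm_inv, hgD, inv_one]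
  · intro i
    show ‖(-((simil p n g.1)⁻¹ • g.1⁻¹.mulVec g.2)) i‖ ≤ 1
    rw [Pi.neg_apply, norm_neg, Pi.smul_apply, smul_eq_mul, norm_mul, hkIsSim_simil hμ,
      norm_inv, hμn, inv_one, one_mul]
    simpa using mulVec_entry_norm_le zero_le_one zero_le_one hinv hgv i

lemma GammaT_tmulG_DeltaTval {g d : HkEl p n} {m : ℕ} (hg : g ∈ GammaT p n)
    (hd : d ∈ DeltaTval p n m) : tmulG p n g d ∈ DeltaTval p n m := by
  obtain ⟨⟨hdQ, hdI, hdv⟩, ν, hν0, hν, hνval⟩ := hd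
  obtain ⟨μ, hμ0, hμ, hμn⟩ := GSpZ_isSim hg.1
  have hgI := hg.1.2.1
  have hgv := hg.2
  refine ⟨⟨⟨μ * ν, mul_ne_zero hμ0 hν0, hkIsSim_mul hμ hν⟩, ?_, ?_⟩,
    μ * ν, mul_ne_zero hμ0 hν0, hkIsSim_mul hμ hν, ?_⟩
  · intro i j
    simpa [tmulG] using mul_entry_norm_le zero_le_one zero_le_one hgI hdI i j
  · intro i
    show ‖(g.1.mulVec d.2 + simil p n d.1 • g.2) i‖ ≤ 1
    rw [Pi.add_apply]
    refine le_trans (Padic.nonarchimedean _ _) (sup_le ?_ ?_)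
    · simpa using mulVec_entry_norm_le zero_le_one zero_le_one hgI hdv i
    · rw [Pi.smul_apply, smul_eq_mul, norm_mul, hkIsSim_simil hν]
      calc ‖ν‖ * ‖g.2 i‖ ≤ 1 * 1 := by
            refine mul_le_mul ?_ (hgv i) (norm_nonneg _) zero_le_one
            exact padic_norm_le_one_of_val hν0 hνval
        _ = 1 := by norm_num
  · rw [Padic.valuation_mul hμ0 hν0, padic_val_zero_of_norm_one hμ0 hμn, hνval, zero_add]

lemma DeltaTval_tmulG_GammaT {d h : HkEl p n} {m : ℕ} (hd : d ∈ DeltaTval p n m)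
    (hh : h ∈ GammaT p n) : tmulG p n d h ∈ DeltaTval p n m := by
  obtain ⟨⟨hdQ, hdI, hdv⟩, ν, hν0, hν, hνval⟩ := hd
  obtain ⟨μ, hμ0, hμ, hμn⟩ := GSpZ_isSim hh.1
  have hhI := hh.1.2.1
  have hhv := hh.2
  refine ⟨⟨⟨ν * μ, mul_ne_zero hν0 hμ0, hkIsSim_mul hν hμ⟩, ?_, ?_⟩,
    ν * μ, mul_ne_zero hν0 hμ0, hkIsSim_mul hν hμ, ?_⟩
  · intro i j
    simpa [tmulG] using mul_entry_norm_le zero_le_one zero_le_one hdI hhI i j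
  · intro i
    show ‖(d.1.mulVec h.2 + simil p n h.1 • d.2) i‖ ≤ 1
    rw [Pi.add_apply]
    refine le_trans (Padic.nonarchimedean _ _) (sup_le ?_ ?_)
    · simpa using mulVec_entry_norm_le zero_le_one zero_le_one hdI hhv i
    · rw [Pi.smul_apply, smul_eq_mul, norm_mul, hkIsSim_simil hμ, hμn, one_mul]
      exact hdv i
  · rw [Padic.valuation_mul hν0 hμ0, padic_val_zero_of_norm_one hμ0 hμn, hνval, add_zero]

lemma DeltaTval_reg {d : HkEl p n} {m : ℕ} (hd : d ∈ DeltaTval p n m) : HkReg p n d := by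
  obtain ⟨-, ν, hν0, hν, -⟩ := hd
  exact ⟨ν, hν0, hν⟩

lemma tdcG_subset_DeltaTval {y : HkEl p n} {m : ℕ} (hy : y ∈ DeltaTval p n m) :
    tdcG p n y ⊆ DeltaTval p n m := by
  rintro z ⟨g, hg, h, hh, rfl⟩
  exact DeltaTval_tmulG_GammaT (GammaT_tmulG_DeltaTval hg hy) hh

lemma self_mem_tlcG (x : HkEl p n) : x ∈ tlcG p n x :=
  ⟨hkE p n, hkE_mem_GammaT, (e_tmulG x).symm⟩

lemma self_mem_tdcG (x : HkEl p n) : x ∈ tdcG p n x :=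
  ⟨hkE p n, hkE_mem_GammaT, hkE p n, hkE_mem_GammaT, by rw [e_tmulG, tmulG_e]⟩

lemma tlcG_tmulG_GammaT {g : HkEl p n} (x : HkEl p n) (hg : g ∈ GammaT p n)
    (hx : HkReg p n x) : tlcG p n (tmulG p n g x) = tlcG p n x := by
  have hgreg := GammaT_reg hg
  ext z
  constructor
  · rintro ⟨h, hh, rfl⟩
    exact ⟨tmulG p n h g, GammaT_mul hh hg, (tmulG_assoc h g x hgreg hx).symm⟩
  · rintro ⟨h, hh, rfl⟩
    refine ⟨tmulG p n h (tinvG p n g), GammaT_mul hh (GammaT_tinv hg), ?_⟩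
    rw [tmulG_assoc h (tinvG p n g) (tmulG p n g x) (hkReg_tinvG hgreg)
      (hkReg_mul hgreg hx)]
    rw [← tmulG_assoc (tinvG p n g) g x hgreg hx, tinvG_tmulG hgreg, e_tmulG]

noncomputable def blkD (p : ℕ) [Fact p.Prime] (n : ℕ) (a b : ℚ_[p]) :
    Matrix (Idx n) (Idx n) ℚ_[p] :=
  Matrix.fromBlocks (a • 1) 0 0 (b • 1)

noncomputable def cvec (p : ℕ) [Fact p.Prime] (n : ℕ) : Idx n → ℚ_[p] :=
  Sum.elim 0 1

noncomputable def zetaEl (p : ℕ) [Fact p.Prime] (n k l : ℕ) : HkEl p n :=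
  (blkD p n ((p : ℚ_[p]) ^ k) ((p : ℚ_[p]) ^ l), cvec p n)

noncomputable def deltaEl (p : ℕ) [Fact p.Prime] (n k : ℕ) : HkEl p n :=
  (blkD p n ((p : ℚ_[p]) ^ k) 1, 0)

noncomputable def d0El (p : ℕ) [Fact p.Prime] (n l : ℕ) : HkEl p n :=
  (blkD p n 1 ((p : ℚ_[p]) ^ l), cvec p n)

lemma smul_one_mul_smul_one (a b : ℚ_[p]) :
    (a • (1 : Matrix (Fin (n+1)) (Fin (n+1)) ℚ_[p])) * (b • 1) = (a * b) • 1 := by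
  rw [Matrix.smul_mul, Matrix.mul_smul, smul_smul, Matrix.one_mul]

lemma blkD_isSim (a b : ℚ_[p]) : HkIsSim p n (blkD p n a b) (a * b) := by
  unfold HkIsSim blkD Jmat
  rw [fromBlocks_transpose, fromBlocks_multiply, fromBlocks_multiply, fromBlocks_smul]
  rw [Matrix.transpose_smul, Matrix.transpose_one, Matrix.transpose_zero]
  congr 1 <;>
    simp [Matrix.smul_mul, Matrix.mul_smul, smul_smul, mul_comm]

lemma blkD_mul (a b c d : ℚ_[p]) :
    blkD p n a b * blkD p n c d = blkD p n (a * c) (b * d) := by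
  unfold blkD
  rw [fromBlocks_multiply]
  congr 1 <;> simp [smul_one_mul_smul_one, smul_smul, mul_comm]

lemma blkD_int {a b : ℚ_[p]} (ha : ‖a‖ ≤ 1) (hb : ‖b‖ ≤ 1) (i j : Idx n) :
    ‖blkD p n a b i j‖ ≤ 1 := by
  rcases i with i | i <;> rcases j with j | j <;>
    simp only [blkD, fromBlocks_apply₁₁, fromBlocks_apply₁₂, fromBlocks_apply₂₁,
      fromBlocks_apply₂₂, Matrix.smul_apply, Matrix.one_apply, Matrix.zero_apply, smul_eq_mul]
  · split
    · simpa
    · simp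
  · simp
  · simp
  · split
    · simpa
    · simp

lemma p_ne_zero' : (p : ℚ_[p]) ≠ 0 := by
  exact_mod_cast (Fact.out : p.Prime).ne_zero

lemma p_pow_ne_zero (k : ℕ) : ((p : ℚ_[p]) ^ k) ≠ 0 := pow_ne_zero _ p_ne_zero'

lemma padic_val_p_pow (k : ℕ) : ((p : ℚ_[p]) ^ k).valuation = (k : ℤ) := by
  induction k with
  | zero => simpa using Padic.valuation_one
  | succ m ih =>
      rw [pow_succ, Padic.valuation_mul (p_pow_ne_zero m) p_ne_zero', ih,
        Padic.valuation_p]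
      push_cast; ring

lemma p_pow_norm_le_one (k : ℕ) : ‖((p : ℚ_[p]) ^ k)‖ ≤ 1 :=
  padic_norm_le_one_of_val (p_pow_ne_zero k) (padic_val_p_pow k)

lemma cvec_int (i : Idx n) : ‖cvec p n i‖ ≤ 1 := by
  rcases i with i | i <;> simp [cvec]

lemma zetaEl_mem_DeltaT {k l : ℕ} : zetaEl p n k l ∈ DeltaT p n := by
  refine ⟨⟨(p : ℚ_[p]) ^ (k + l), p_pow_ne_zero _, ?_⟩, ?_, ?_⟩
  · have := blkD_isSim (p := p) (n := n) ((p : ℚ_[p]) ^ k) ((p : ℚ_[p]) ^ l)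
    rwa [← pow_add] at this
  · exact fun i j => blkD_int (p_pow_norm_le_one k) (p_pow_norm_le_one l) i j
  · exact fun i => cvec_int i

lemma deltaEl_mem_DeltaTval {k : ℕ} : deltaEl p n k ∈ DeltaTval p n k := by
  have hsim : HkIsSim p n (blkD p n ((p : ℚ_[p]) ^ k) 1) ((p : ℚ_[p]) ^ k) := by
    have := blkD_isSim (p := p) (n := n) ((p : ℚ_[p]) ^ k) 1
    rwa [mul_one] at this
  refine ⟨⟨⟨(p : ℚ_[p]) ^ k, p_pow_ne_zero _, hsim⟩, ?_, ?_⟩,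
    (p : ℚ_[p]) ^ k, p_pow_ne_zero _, hsim, padic_val_p_pow k⟩
  · exact fun i j => blkD_int (p_pow_norm_le_one k) (by simp) i j
  · intro i; simp [deltaEl]

lemma d0El_mem_DeltaTval {l : ℕ} : d0El p n l ∈ DeltaTval p n l := by
  have hsim : HkIsSim p n (blkD p n 1 ((p : ℚ_[p]) ^ l)) ((p : ℚ_[p]) ^ l) := by
    have := blkD_isSim (p := p) (n := n) 1 ((p : ℚ_[p]) ^ l)
    rwa [one_mul] at this
  refine ⟨⟨⟨(p : ℚ_[p]) ^ l, p_pow_ne_zero _, hsim⟩, ?_, ?_⟩,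
    (p : ℚ_[p]) ^ l, p_pow_ne_zero _, hsim, padic_val_p_pow l⟩
  · exact fun i j => blkD_int (by simp) (p_pow_norm_le_one l) i j
  · exact fun i => cvec_int i

lemma delta_mul_d0 (k l : ℕ) :
    tmulG p n (deltaEl p n k) (d0El p n l) = zetaEl p n k l := by
  unfold tmulG deltaEl d0El zetaEl
  refine Prod.ext ?_ ?_
  · show blkD p n ((p:ℚ_[p])^k) 1 * blkD p n 1 ((p:ℚ_[p])^l) = _
    rw [blkD_mul, mul_one, one_mul]
  · show (blkD p n ((p:ℚ_[p])^k) 1).mulVec (cvec p n)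
      + simil p n (blkD p n 1 ((p:ℚ_[p])^l)) • 0 = cvec p n
    rw [smul_zero, add_zero]
    unfold blkD cvec
    rw [Matrix.fromBlocks_mulVec]
    refine funext fun i => ?_
    rcases i with i | i
    · simp
    · simp [Matrix.one_mulVec]

lemma blkD_mul_apply_inr (a b : ℚ_[p]) (M : Matrix (Idx n) (Idx n) ℚ_[p])
    (i : Fin (n+1)) (j : Idx n) :
    (blkD p n a b * M) (Sum.inr i) j = b * M (Sum.inr i) j := by
  rw [Matrix.mul_apply, Fintype.sum_sum_type]
  have h1 : ∀ s : Fin (n+1), blkD p n a b (Sum.inr i) (Sum.inl s) = 0 := by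
    intro s; simp [blkD]
  have h2 : ∀ s : Fin (n+1), blkD p n a b (Sum.inr i) (Sum.inr s)
      = if i = s then b else 0 := by
    intro s
    simp [blkD, Matrix.smul_apply, Matrix.one_apply]
  simp only [h1, h2, zero_mul, Finset.sum_const_zero, zero_add, ite_mul]
  rw [Finset.sum_ite_eq (Finset.univ) i (fun s => b * M (Sum.inr s) j)]
  simp

lemma inv_entry_bound {d : Matrix (Idx n) (Idx n) ℚ_[p]} {ν : ℚ_[p]}
    (hν : HkIsSim p n d ν) (hν0 : ν ≠ 0) (hint : ∀ i j, ‖d i j‖ ≤ 1) (i j : Idx n) :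
    ‖d⁻¹ i j‖ ≤ ‖ν⁻¹‖ := by
  rw [hkIsSim_inv_eq hν hν0, Matrix.smul_apply, smul_eq_mul, norm_mul]
  have h1 : ∀ i j, ‖(-Jmat p n) i j‖ ≤ 1 := by
    intro i j; rw [Matrix.neg_apply, norm_neg]; exact Jmat_norm_le i j
  have h2 : ∀ i j, ‖dᵀ i j‖ ≤ 1 := fun i j => hint j i
  have h3 : ‖((-Jmat p n) * dᵀ * Jmat p n) i j‖ ≤ 1 := by
    simpa using mul_entry_norm_le (mul_nonneg zero_le_one zero_le_one) zero_le_one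
      (fun i j => by simpa using mul_entry_norm_le zero_le_one zero_le_one h1 h2 i j)
      (fun i j => Jmat_norm_le i j) i j
  calc ‖ν⁻¹‖ * ‖((-Jmat p n) * dᵀ * Jmat p n) i j‖ ≤ ‖ν⁻¹‖ * 1 :=
        mul_le_mul_of_nonneg_left h3 (norm_nonneg _)
    _ = ‖ν⁻¹‖ := mul_one _

lemma no_factorization {k l : ℕ} (hk : 0 < k) (hkl : k < l) {a d : HkEl p n}
    (ha : a ∈ DeltaTval p n l) (hd : d ∈ DeltaTval p n k) :
    tmulG p n a d ≠ zetaEl p n k l := by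
  intro heq
  obtain ⟨⟨haQ, haI, hav⟩, μ, hμ0, hμ, hμval⟩ := ha
  obtain ⟨⟨hdQ, hdI, hdv⟩, ν, hν0, hν, hνval⟩ := hd
  have hνn : ‖ν‖ = (p : ℝ) ^ (-(k : ℤ)) := padic_norm_of_val hν0 hνval
  have hνinv : ‖ν⁻¹‖ = (p : ℝ) ^ (k : ℤ) := by
    rw [norm_inv, hνn, ← _root_.zpow_neg, neg_neg]
  have hmat : a.1 * d.1 = blkD p n ((p:ℚ_[p])^k) ((p:ℚ_[p])^l) := congrArg Prod.fst heq
  have hA : a.1 = blkD p n ((p:ℚ_[p])^k) ((p:ℚ_[p])^l) * d.1⁻¹ := by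
    rw [← hmat, Matrix.mul_assoc, hkIsSim_mul_inv hν hν0, Matrix.mul_one]
  have hrow : ∀ j, ‖a.1 (Sum.inr 0) j‖ ≤ (p : ℝ) ^ ((k : ℤ) - l) := by
    intro j
    rw [hA, blkD_mul_apply_inr, norm_mul]
    have h1 : ‖((p:ℚ_[p])^l)‖ = (p : ℝ) ^ (-(l:ℤ)) := by
      simpa using Padic.norm_p_pow (p := p) l
    rw [h1]
    calc (p : ℝ) ^ (-(l:ℤ)) * ‖d.1⁻¹ (Sum.inr 0) j‖
        ≤ (p : ℝ) ^ (-(l:ℤ)) * (p : ℝ) ^ (k : ℤ) := by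
          refine mul_le_mul_of_nonneg_left ?_ (by positivity)
          rw [← hνinv]; exact inv_entry_bound hν hν0 hdI _ j
      _ = (p : ℝ) ^ ((k : ℤ) - l) := by
          rw [← zpow_add₀ (by linarith [one_lt_p_real (p := p)] : (p:ℝ) ≠ 0)]; ring_nf
  have hvec := congrFun (congrArg Prod.snd heq) (Sum.inr 0)
  have hcv : cvec p n (Sum.inr (0 : Fin (n+1))) = 1 := by simp [cvec]
  have hval1 : (a.1.mulVec d.2 + simil p n d.1 • a.2) (Sum.inr 0) = 1 := by
    simpa [tmulG, zetaEl, cvec] using hvec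
  have hple : (p : ℝ) ^ ((k : ℤ) - l) ≤ (p : ℝ) ^ (-1 : ℤ) :=
    zpow_le_zpow_right₀ (le_of_lt one_lt_p_real) (by omega)
  have hple2 : (p : ℝ) ^ (-(k : ℤ)) ≤ (p : ℝ) ^ (-1 : ℤ) :=
    zpow_le_zpow_right₀ (le_of_lt one_lt_p_real) (by omega)
  have ht1 : ‖a.1.mulVec d.2 (Sum.inr 0)‖ ≤ (p : ℝ) ^ (-1 : ℤ) := by
    rw [Matrix.mulVec, dotProduct]
    refine padic_norm_sum_le _ _ (le_of_lt (zpow_pos (by linarith [one_lt_p_real (p := p)]) _)) (fun t _ => ?_)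
    rw [norm_mul]
    calc ‖a.1 (Sum.inr 0) t‖ * ‖d.2 t‖ ≤ (p : ℝ) ^ ((k : ℤ) - l) * 1 :=
          mul_le_mul (hrow t) (hdv t) (norm_nonneg _) (by positivity)
      _ ≤ (p : ℝ) ^ (-1 : ℤ) := by rw [mul_one]; exact hple
  have ht2 : ‖(simil p n d.1 • a.2) (Sum.inr 0)‖ ≤ (p : ℝ) ^ (-1 : ℤ) := by
    rw [Pi.smul_apply, smul_eq_mul, norm_mul, hkIsSim_simil hν, hνn]
    calc (p:ℝ) ^ (-(k:ℤ)) * ‖a.2 (Sum.inr 0)‖ ≤ (p:ℝ) ^ (-(k:ℤ)) * 1 :=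
          mul_le_mul_of_nonneg_left (hav _) (by positivity)
      _ ≤ (p : ℝ) ^ (-1 : ℤ) := by rw [mul_one]; exact hple2
  have : ‖(a.1.mulVec d.2 + simil p n d.1 • a.2) (Sum.inr (0 : Fin (n+1)))‖ ≤ (p : ℝ) ^ (-1 : ℤ) := by
    rw [Pi.add_apply]
    exact le_trans (Padic.nonarchimedean _ _) (sup_le ht1 ht2)
  rw [hval1] at this
  have hlt : (p : ℝ) ^ (-1 : ℤ) < 1 := by
    have := zpow_lt_zpow_right₀ (one_lt_p_real (p := p)) (show (-1:ℤ) < 0 by norm_num)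
    simpa using this
  rw [norm_one] at this
  linarith

lemma zeta_not_factor {k l : ℕ} (hk : 0 < k) (hkl : k < l) {z : HkEl p n}
    (hz : tdcG p n z = tdcG p n (zetaEl p n k l))
    {x y : HkEl p n} (hx : x ∈ DeltaTval p n l) (hy : y ∈ DeltaTval p n k) :
    {S : Set (HkEl p n) | ∃ d ∈ tdcG p n y,
      tmulG p n z (tinvG p n d) ∈ tdcG p n x ∧ S = tlcG p n d} = ∅ := by
  rw [Set.eq_empty_iff_forall_notMem]
  rintro S ⟨d, hdm, hcond, rfl⟩
  have hd : d ∈ DeltaTval p n k := tdcG_subset_DeltaTval hy hdm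
  have hu : tmulG p n z (tinvG p n d) ∈ DeltaTval p n l := tdcG_subset_DeltaTval hx hcond
  set u := tmulG p n z (tinvG p n d) with hu_def
  have hzud : tmulG p n u d = z := tmulG_tinvG_mul_cancel z d (DeltaTval_reg hd)
  have hζ : zetaEl p n k l ∈ tdcG p n z := by
    rw [hz]; exact self_mem_tdcG _
  obtain ⟨g, hg, h, hh, hζeq⟩ := hζ
  have hureg : HkReg p n u := DeltaTval_reg hu
  have hdreg : HkReg p n d := DeltaTval_reg hd
  have hζeq2 : tmulG p n (tmulG p n (tmulG p n g u) d) h = zetaEl p n k l := by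
    rw [tmulG_assoc g u d hureg hdreg, hzud] at *
    exact hζeq.symm
  have hζeq3 : tmulG p n (tmulG p n g u) (tmulG p n d h) = zetaEl p n k l := by
    rw [← tmulG_assoc (tmulG p n g u) d h hdreg (GammaT_reg hh)]
    exact hζeq2
  exact no_factorization hk hkl (GammaT_tmulG_DeltaTval hg hu)
    (DeltaTval_tmulG_GammaT hd hh) hζeq3

lemma padic_norm_sub_le {x y : ℚ_[p]} {c : ℝ} (hx : ‖x‖ ≤ c) (hy : ‖y‖ ≤ c) :
    ‖x - y‖ ≤ c := by
  rw [sub_eq_add_neg]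
  refine le_trans (Padic.nonarchimedean _ _) (sup_le hx ?_)
  rwa [norm_neg]

lemma p_zpow_pos (z : ℤ) : (0:ℝ) < (p:ℝ) ^ z :=
  zpow_pos (by linarith [one_lt_p_real (p := p)]) z

/-- Congruent (mod `p^(2m+1)`) elements of `Δ̃_{p^m}` generate the same left coset. -/
lemma tlcG_eq_of_congr {m : ℕ} {d d' : HkEl p n} (hd : d ∈ DeltaTval p n m)
    (hd' : d' ∈ DeltaTval p n m)
    (hmat : ∀ i j, ‖d'.1 i j - d.1 i j‖ ≤ (p:ℝ) ^ (-((2*m+1 : ℕ) : ℤ)))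
    (hvecc : ∀ i, ‖d'.2 i - d.2 i‖ ≤ (p:ℝ) ^ (-((2*m+1 : ℕ) : ℤ))) :
    tlcG p n d' = tlcG p n d := by
  obtain ⟨⟨hdQ, hdI, hdv⟩, ν, hν0, hν, hνval⟩ := hd
  obtain ⟨⟨hdQ', hdI', hdv'⟩, ν', hν0', hν', hνval'⟩ := hd'
  have hνn : ‖ν‖ = (p : ℝ) ^ (-(m : ℤ)) := padic_norm_of_val hν0 hνval
  have hνn' : ‖ν'‖ = (p : ℝ) ^ (-(m : ℤ)) := padic_norm_of_val hν0' hνval'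
  have hνinv : ‖ν⁻¹‖ = (p : ℝ) ^ (m : ℤ) := by
    rw [norm_inv, hνn, ← _root_.zpow_neg, neg_neg]
  set E := (d'.1 - d.1) * d.1⁻¹ with hE
  have hEbound : ∀ i j, ‖E i j‖ ≤ (p:ℝ) ^ (-((m:ℤ)+1)) := by
    intro i j
    have h := mul_entry_norm_le (A := d'.1 - d.1) (B := d.1⁻¹)
      (a := (p:ℝ) ^ (-((2*m+1 : ℕ) : ℤ))) (b := (p:ℝ) ^ (m:ℤ))
      (le_of_lt (p_zpow_pos _)) (le_of_lt (p_zpow_pos _))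
      (fun i j => by simpa [Matrix.sub_apply] using hmat i j)
      (fun i j => by rw [← hνinv]; exact inv_entry_bound hν hν0 hdI i j) i j
    refine le_trans h ?_
    rw [← zpow_add₀ (by linarith [one_lt_p_real (p := p)] : (p:ℝ) ≠ 0)]
    refine zpow_le_zpow_right₀ (le_of_lt one_lt_p_real) (by push_cast; omega)
  have hGdecomp : d'.1 * d.1⁻¹ = 1 + E := by
    rw [hE, Matrix.sub_mul, hkIsSim_mul_inv hν hν0]
    abel
  have hGint : ∀ i j, ‖(d'.1 * d.1⁻¹) i j‖ ≤ 1 := by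
    intro i j
    rw [hGdecomp, Matrix.add_apply]
    refine le_trans (Padic.nonarchimedean _ _) (sup_le ?_ ?_)
    · rcases eq_or_ne i j with h | h <;> simp [Matrix.one_apply, h]
    · refine le_trans (hEbound i j) ?_
      exact zpow_le_one_of_nonpos₀ (le_of_lt one_lt_p_real) (by omega)
  have hGsim : HkIsSim p n (d'.1 * d.1⁻¹) (ν' * ν⁻¹) :=
    hkIsSim_mul hν' (hkIsSim_inv hν hν0)
  have hunit : ‖ν' * ν⁻¹‖ = 1 := by
    rw [norm_mul, norm_inv, hνn, hνn']
    field_simp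
    exact div_self (p_zpow_pos _).ne'
  have hGdet : ‖(d'.1 * d.1⁻¹).det‖ = 1 := by
    have h := norm_pow_card hGsim
    rw [hunit, one_pow] at h
    exact real_pow_eq_one (norm_nonneg _) (by norm_num) h
  have hsimd : simil p n d.1 = ν := hkIsSim_simil hν
  have hsiminv : simil p n d.1⁻¹ = ν⁻¹ := hkIsSim_simil (hkIsSim_inv hν hν0)
  set g := tmulG p n d' (tinvG p n d) with hg
  have hgvec : g.2 = ν⁻¹ • (d'.2 - d.2 - E.mulVec d.2) := by
    show d'.1.mulVec (tinvG p n d).2 + simil p n (tinvG p n d).1 • d'.2 = _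
    show d'.1.mulVec (-((simil p n d.1)⁻¹ • d.1⁻¹.mulVec d.2)) + simil p n d.1⁻¹ • d'.2 = _
    rw [hsimd, hsiminv, Matrix.mulVec_neg, Matrix.mulVec_smul, Matrix.mulVec_mulVec,
      hGdecomp, Matrix.add_mulVec, Matrix.one_mulVec]
    module
  have hgvec_int : ∀ i, ‖g.2 i‖ ≤ 1 := by
    intro i
    rw [hgvec, Pi.smul_apply, smul_eq_mul, norm_mul, hνinv]
    have hle : (p:ℝ) ^ (-((2*m+1 : ℕ) : ℤ)) ≤ (p:ℝ) ^ (-((m:ℤ)+1)) :=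
      zpow_le_zpow_right₀ (le_of_lt one_lt_p_real) (by push_cast; omega)
    have hw : ‖(d'.2 - d.2 - E.mulVec d.2) i‖ ≤ (p:ℝ) ^ (-((m:ℤ)+1)) := by
      rw [Pi.sub_apply, Pi.sub_apply]
      refine padic_norm_sub_le (le_trans (hvecc i) hle) ?_
      have h2 := mulVec_entry_norm_le (le_of_lt (p_zpow_pos (-((m:ℤ)+1)))) zero_le_one
        hEbound hdv i
      simpa using h2
    calc (p:ℝ) ^ (m:ℤ) * ‖(d'.2 - d.2 - E.mulVec d.2) i‖
        ≤ (p:ℝ) ^ (m:ℤ) * (p:ℝ) ^ (-((m:ℤ)+1)) :=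
          mul_le_mul_of_nonneg_left hw (le_of_lt (p_zpow_pos _))
      _ = (p:ℝ) ^ (-1 : ℤ) := by
          rw [← zpow_add₀ (by linarith [one_lt_p_real (p := p)] : (p:ℝ) ≠ 0)]
          norm_num
      _ ≤ 1 := zpow_le_one_of_nonpos₀ (le_of_lt one_lt_p_real) (by omega)
  have hg1 : g.1 = d'.1 * d.1⁻¹ := rfl
  have hgGamma : g ∈ GammaT p n := by
    refine ⟨⟨⟨ν' * ν⁻¹, mul_ne_zero hν0' (inv_ne_zero hν0), ?_⟩, ?_, ?_⟩, hgvec_int⟩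
    · rw [hg1]; exact hGsim
    · rw [hg1]; exact hGint
    · rw [hg1]; exact hGdet
  have hcan : tmulG p n g d = d' := tmulG_tinvG_mul_cancel d' d ⟨ν, hν0, hν⟩
  rw [← hcan]
  exact tlcG_tmulG_GammaT d hgGamma ⟨ν, hν0, hν⟩

noncomputable def hkRed (p : ℕ) [Fact p.Prime] (N : ℕ) (x : ℚ_[p]) : ZMod (p ^ N) :=
  if h : ‖x‖ ≤ 1 then PadicInt.toZModPow N ⟨x, h⟩ else 0

lemma hkRed_close {N : ℕ} {x y : ℚ_[p]} (hx : ‖x‖ ≤ 1) (hy : ‖y‖ ≤ 1)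
    (h : hkRed p N x = hkRed p N y) : ‖x - y‖ ≤ (p:ℝ) ^ (-(N : ℤ)) := by
  rw [hkRed, hkRed, dif_pos hx, dif_pos hy] at h
  set a : ℤ_[p] := ⟨x, hx⟩ with ha
  set b : ℤ_[p] := ⟨y, hy⟩ with hb
  have hker : (a - b : ℤ_[p]) ∈ RingHom.ker (PadicInt.toZModPow (p := p) N) := by
    rw [RingHom.mem_ker, map_sub, h, sub_self]
  rw [PadicInt.ker_toZModPow] at hker
  have hnorm := (PadicInt.norm_le_pow_iff_mem_span_pow _ N).mpr hker
  have hco : ((a - b : ℤ_[p]) : ℚ_[p]) = x - y := rfl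
  rwa [PadicInt.norm_def, hco] at hnorm

noncomputable def hkPack (p : ℕ) [Fact p.Prime] (n N : ℕ) (d : HkEl p n) :
    Matrix (Idx n) (Idx n) (ZMod (p ^ N)) × (Idx n → ZMod (p ^ N)) :=
  (Matrix.of (fun i j => hkRed p N (d.1 i j)), fun i => hkRed p N (d.2 i))

lemma tlcG_eq_of_pack {m : ℕ} {d d' : HkEl p n} (hd : d ∈ DeltaTval p n m)
    (hd' : d' ∈ DeltaTval p n m)
    (h : hkPack p n (2*m+1) d' = hkPack p n (2*m+1) d) :
    tlcG p n d' = tlcG p n d := by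
  have h1 := congrArg Prod.fst h
  have h2 := congrArg Prod.snd h
  refine tlcG_eq_of_congr hd hd' (fun i j => ?_) (fun i => ?_)
  · exact hkRed_close (hd'.1.2.1 i j) (hd.1.2.1 i j)
      (congrFun (congrFun h1 i) j)
  · exact hkRed_close (hd'.1.2.2 i) (hd.1.2.2 i) (congrFun h2 i)

lemma mTG_set_finite {m : ℕ} {y : HkEl p n} (hy : y ∈ DeltaTval p n m)
    (x z : HkEl p n) :
    {S : Set (HkEl p n) | ∃ d ∈ tdcG p n y,
      tmulG p n z (tinvG p n d) ∈ tdcG p n x ∧ S = tlcG p n d}.Finite := by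
  haveI : NeZero (p ^ (2*m+1)) := ⟨pow_ne_zero _ (Fact.out : p.Prime).ne_zero⟩
  rw [← Set.finite_coe_iff]
  set 𝒮 := {S : Set (HkEl p n) | ∃ d ∈ tdcG p n y,
      tmulG p n z (tinvG p n d) ∈ tdcG p n x ∧ S = tlcG p n d} with h𝒮
  have hinj : Function.Injective (fun S : ↥𝒮 =>
      hkPack p n (2*m+1) '' {d | d ∈ tdcG p n y ∧ (S : Set (HkEl p n)) = tlcG p n d}) := by
    intro a b hF
    obtain ⟨d, hdm, -, hSd⟩ := a.2
    obtain ⟨d', hdm', -, hSd'⟩ := b.2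
    simp only at hF
    have hmem : hkPack p n (2*m+1) d ∈ hkPack p n (2*m+1) ''
        {e | e ∈ tdcG p n y ∧ (a : Set (HkEl p n)) = tlcG p n e} := ⟨d, ⟨hdm, hSd⟩, rfl⟩
    rw [hF] at hmem
    obtain ⟨e, ⟨hem, hSe⟩, hpack⟩ := hmem
    have heq : tlcG p n d = tlcG p n e :=
      tlcG_eq_of_pack (tdcG_subset_DeltaTval hy hem) (tdcG_subset_DeltaTval hy hdm) hpack.symm
    apply Subtype.ext
    rw [hSd, heq, ← hSe, hSd']
  exact Finite.of_injective _ hinj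

lemma mTG_eq_card (x y z : HkEl p n) :
    mTG p n x y z = Nat.card {S : Set (HkEl p n) | ∃ d ∈ tdcG p n y,
      tmulG p n z (tinvG p n d) ∈ tdcG p n x ∧ S = tlcG p n d} := rfl

lemma mTG_zero_of_class {k l : ℕ} (hk : 0 < k) (hkl : k < l) {x y z : HkEl p n}
    (hx : x ∈ DeltaTval p n l) (hy : y ∈ DeltaTval p n k)
    (hz : tdcG p n z = tdcG p n (zetaEl p n k l)) :
    mTG p n x y z = 0 := by
  rw [mTG_eq_card, zeta_not_factor hk hkl hz hx hy]
  simp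

lemma mTG_ne_zero {k l : ℕ} {x y z : HkEl p n}
    (hyval : y ∈ DeltaTval p n l)
    (hz : tdcG p n z = tdcG p n (zetaEl p n k l))
    (hx : tdcG p n x = tdcG p n (deltaEl p n k))
    (hy : tdcG p n y = tdcG p n (d0El p n l)) :
    mTG p n x y z ≠ 0 := by
  have regδ : HkReg p n (deltaEl p n k) := DeltaTval_reg deltaEl_mem_DeltaTval
  have regd0 : HkReg p n (d0El p n l) := DeltaTval_reg d0El_mem_DeltaTval
  rw [mTG_eq_card, Nat.card_ne_zero]
  constructor
  · rw [Set.nonempty_coe_sort]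
    have hzmem : z ∈ tdcG p n (zetaEl p n k l) := by
      rw [← hz]; exact self_mem_tdcG z
    obtain ⟨g, hg, h, hh, hzeq⟩ := hzmem
    rw [← delta_mul_d0 k l] at hzeq
    set d := tmulG p n (d0El p n l) h with hd_def
    have hregd : HkReg p n d := hkReg_mul regd0 (GammaT_reg hh)
    have hd_mem : d ∈ tdcG p n y := by
      rw [hy]
      exact ⟨hkE p n, hkE_mem_GammaT, h, hh, by rw [e_tmulG]⟩
    have hz2 : z = tmulG p n (tmulG p n g (deltaEl p n k)) d := by
      rw [hzeq, ← tmulG_assoc g (deltaEl p n k) (d0El p n l) regδ regd0,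
        tmulG_assoc _ (d0El p n l) h regd0 (GammaT_reg hh)]
    have hcomp : tmulG p n z (tinvG p n d) = tmulG p n g (deltaEl p n k) := by
      rw [hz2]
      exact tmulG_mul_tinvG_cancel _ d hregd
    have hcond : tmulG p n z (tinvG p n d) ∈ tdcG p n x := by
      rw [hx, hcomp]
      exact ⟨g, hg, hkE p n, hkE_mem_GammaT, by rw [tmulG_e]⟩
    exact ⟨tlcG p n d, d, hd_mem, hcond, rfl⟩
  · exact (mTG_set_finite hyval x z).to_subtype

end HkAux

theorem heisenberg_hecke_noncommutative
    (R : Type*) [Ring R]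
    (Tt : Matrix (Idx n) (Idx n) ℚ_[p] × (Idx n → ℚ_[p]) → R)
    (Tp : ℕ → R)
    -- `Tt` is constant exactly on double cosets:
    (hTt : ∀ x ∈ DeltaT p n, ∀ y ∈ DeltaT p n, (tdcG p n x = tdcG p n y ↔ Tt x = Tt y))
    -- the `Tt`-classes are linearly independent over ℤ:
    (hfree : ∀ F : Finset (Matrix (Idx n) (Idx n) ℚ_[p] × (Idx n → ℚ_[p])),
      (∀ z ∈ F, z ∈ DeltaT p n) →
      (∀ z ∈ F, ∀ z' ∈ F, tdcG p n z = tdcG p n z' → z = z') →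
      ∀ f : Matrix (Idx n) (Idx n) ℚ_[p] × (Idx n → ℚ_[p]) → ℤ,
        ∑ z ∈ F, f z • Tt z = 0 → ∀ z ∈ F, f z = 0)
    -- multiplication is given by the structure constants:
    (hmul : ∀ x ∈ DeltaT p n, ∀ y ∈ DeltaT p n,
      ∃ F : Finset (Matrix (Idx n) (Idx n) ℚ_[p] × (Idx n → ℚ_[p])),
        (∀ z ∈ F, z ∈ DeltaT p n) ∧
        (∀ z ∈ F, ∀ z' ∈ F, tdcG p n z = tdcG p n z' → z = z') ∧
        (∀ z ∈ DeltaT p n, mTG p n x y z ≠ 0 → ∃ z' ∈ F, tdcG p n z' = tdcG p n z) ∧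
        Tt x * Tt y = ∑ z ∈ F, (mTG p n x y z : ℤ) • Tt z)
    -- `Tp m = T̃(p^m)` is the sum of the basis elements with `v_p(μ) = m`:
    (hTp : ∀ m : ℕ, ∃ F : Finset (Matrix (Idx n) (Idx n) ℚ_[p] × (Idx n → ℚ_[p])),
      (∀ z ∈ F, z ∈ DeltaTval p n m) ∧
      (∀ z ∈ F, ∀ z' ∈ F, tdcG p n z = tdcG p n z' → z = z') ∧
      (∀ z ∈ DeltaTval p n m, ∃ z' ∈ F, tdcG p n z' = tdcG p n z) ∧
      Tp m = ∑ z ∈ F, Tt z)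
    (k l : ℕ) (hk : 0 < k) (hkl : k < l) :
    Tp k * Tp l ≠ Tp l * Tp k := by
  classical
  intro hcomm
  obtain ⟨Fk, hFk1, hFk2, hFk3, hFkEq⟩ := hTp k
  obtain ⟨Fl, hFl1, hFl2, hFl3, hFlEq⟩ := hTp l
  -- a choice of expansion finsets for products
  set Ffun : HkEl p n × HkEl p n → Finset (HkEl p n) := fun q =>
    if hq : q.1 ∈ DeltaT p n ∧ q.2 ∈ DeltaT p n then (hmul q.1 hq.1 q.2 hq.2).choose
    else ∅ with hFfun_def
  have hFfun : ∀ q : HkEl p n × HkEl p n, q.1 ∈ DeltaT p n → q.2 ∈ DeltaT p n →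
      (∀ z ∈ Ffun q, z ∈ DeltaT p n) ∧
      (∀ z ∈ Ffun q, ∀ z' ∈ Ffun q, tdcG p n z = tdcG p n z' → z = z') ∧
      (∀ z ∈ DeltaT p n, mTG p n q.1 q.2 z ≠ 0 → ∃ z' ∈ Ffun q, tdcG p n z' = tdcG p n z) ∧
      Tt q.1 * Tt q.2 = ∑ z ∈ Ffun q, (mTG p n q.1 q.2 z : ℤ) • Tt z := by
    intro q hq1 hq2
    have hspec := (hmul q.1 hq1 q.2 hq2).choose_spec
    rw [hFfun_def]
    simpa [dif_pos (And.intro hq1 hq2)] using hspec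
  have hFkD : ∀ z ∈ Fk, z ∈ DeltaT p n := fun z hz => (hFk1 z hz).1
  have hFlD : ∀ z ∈ Fl, z ∈ DeltaT p n := fun z hz => (hFl1 z hz).1
  set ZF : Finset (HkEl p n) :=
    ((Fk ×ˢ Fl).biUnion Ffun) ∪ ((Fl ×ˢ Fk).biUnion Ffun) with hZF
  have hZdel : ∀ z ∈ ZF, z ∈ DeltaT p n := by
    intro z hz
    rcases Finset.mem_union.mp hz with h | h
    · obtain ⟨q, hq, hzq⟩ := Finset.mem_biUnion.mp h
      obtain ⟨hq1, hq2⟩ := Finset.mem_product.mp hq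
      exact (hFfun q (hFkD _ hq1) (hFlD _ hq2)).1 z hzq
    · obtain ⟨q, hq, hzq⟩ := Finset.mem_biUnion.mp h
      obtain ⟨hq1, hq2⟩ := Finset.mem_product.mp hq
      exact (hFfun q (hFlD _ hq1) (hFkD _ hq2)).1 z hzq
  -- canonical representatives of double cosets inside ZF
  set repC : Set (HkEl p n) → HkEl p n := fun C =>
    if h : ∃ w, w ∈ ZF ∧ tdcG p n w = C then h.choose else zetaEl p n k l with hrepC
  set rep : HkEl p n → HkEl p n := fun z => repC (tdcG p n z) with hrep
  have hrep_spec : ∀ z ∈ ZF, rep z ∈ ZF ∧ tdcG p n (rep z) = tdcG p n z := by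
    intro z hz
    have h : ∃ w, w ∈ ZF ∧ tdcG p n w = tdcG p n z := ⟨z, hz, rfl⟩
    rw [hrep]
    simp only [hrepC, dif_pos h]
    exact ⟨h.choose_spec.1, h.choose_spec.2⟩
  have hrep_congr : ∀ z z', tdcG p n z = tdcG p n z' → rep z = rep z' := by
    intro z z' h
    rw [hrep]
    simp only [h]
  set W : Finset (HkEl p n) := ZF.image rep with hW
  have hrep_memW : ∀ z ∈ ZF, rep z ∈ W := by
    intro z hz
    exact Finset.mem_image.mpr ⟨z, hz, rfl⟩
  have hWdel : ∀ w ∈ W, w ∈ DeltaT p n := by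
    intro w hw
    obtain ⟨z, hz, rfl⟩ := Finset.mem_image.mp hw
    exact hZdel _ (hrep_spec z hz).1
  have hWinj : ∀ w ∈ W, ∀ w' ∈ W, tdcG p n w = tdcG p n w' → w = w' := by
    intro w hw w' hw' h
    obtain ⟨z, hz, rfl⟩ := Finset.mem_image.mp hw
    obtain ⟨z', hz', rfl⟩ := Finset.mem_image.mp hw'
    have : tdcG p n z = tdcG p n z' := by
      rw [← (hrep_spec z hz).2, ← (hrep_spec z' hz').2, h]
    exact hrep_congr z z' this
  -- expansion of a product of sums over the representative set W
  have hexpand : ∀ F1 F2 : Finset (HkEl p n),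
      (∀ z ∈ F1, z ∈ DeltaT p n) → (∀ z ∈ F2, z ∈ DeltaT p n) →
      ((F1 ×ˢ F2).biUnion Ffun ⊆ ZF) →
      (∑ x ∈ F1, Tt x) * (∑ y ∈ F2, Tt y) =
        ∑ w ∈ W, (∑ q ∈ F1 ×ˢ F2, ∑ z ∈ (Ffun q).filter (fun z => rep z = w),
          (mTG p n q.1 q.2 z : ℤ)) • Tt w := by
    intro F1 F2 hF1 hF2 hsub
    rw [Finset.sum_mul_sum, ← Finset.sum_product']
    have step1 : ∑ q ∈ F1 ×ˢ F2, Tt q.1 * Tt q.2 =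
        ∑ q ∈ F1 ×ˢ F2, ∑ z ∈ Ffun q, (mTG p n q.1 q.2 z : ℤ) • Tt z := by
      refine Finset.sum_congr rfl (fun q hq => ?_)
      obtain ⟨hq1, hq2⟩ := Finset.mem_product.mp hq
      exact (hFfun q (hF1 _ hq1) (hF2 _ hq2)).2.2.2
    rw [step1]
    have step2 : ∀ q ∈ F1 ×ˢ F2, ∑ z ∈ Ffun q, (mTG p n q.1 q.2 z : ℤ) • Tt z =
        ∑ w ∈ W, ∑ z ∈ (Ffun q).filter (fun z => rep z = w),
          (mTG p n q.1 q.2 z : ℤ) • Tt w := by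
      intro q hq
      have hmaps : ∀ z ∈ Ffun q, rep z ∈ W := by
        intro z hz
        refine hrep_memW z (hsub ?_)
        exact Finset.mem_biUnion.mpr ⟨q, hq, hz⟩
      rw [← Finset.sum_fiberwise_of_maps_to hmaps
        (fun z => (mTG p n q.1 q.2 z : ℤ) • Tt z)]
      refine Finset.sum_congr rfl (fun w hw => ?_)
      refine Finset.sum_congr rfl (fun z hz => ?_)
      obtain ⟨hzF, hzw⟩ := Finset.mem_filter.mp hz
      have hzZF : z ∈ ZF := hsub (Finset.mem_biUnion.mpr ⟨q, hq, hzF⟩)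
      have htd : tdcG p n z = tdcG p n w := by
        rw [← hzw, (hrep_spec z hzZF).2]
      have hTteq : Tt z = Tt w :=
        (hTt z (hZdel z hzZF) w (hWdel w hw)).mp htd
      rw [hTteq]
    rw [Finset.sum_congr rfl step2, Finset.sum_comm]
    refine Finset.sum_congr rfl (fun w hw => ?_)
    rw [Finset.sum_smul]
    refine Finset.sum_congr rfl (fun q hq => ?_)
    rw [Finset.sum_smul]
  have hsub1 : (Fk ×ˢ Fl).biUnion Ffun ⊆ ZF := Finset.subset_union_left
  have hsub2 : (Fl ×ˢ Fk).biUnion Ffun ⊆ ZF := Finset.subset_union_right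
  have hEq1 := hexpand Fk Fl hFkD hFlD hsub1
  have hEq2 := hexpand Fl Fk hFlD hFkD hsub2
  -- the zero linear combination
  set c1 : HkEl p n → ℤ := fun w => ∑ q ∈ Fk ×ˢ Fl,
    ∑ z ∈ (Ffun q).filter (fun z => rep z = w), (mTG p n q.1 q.2 z : ℤ) with hc1
  set c2 : HkEl p n → ℤ := fun w => ∑ q ∈ Fl ×ˢ Fk,
    ∑ z ∈ (Ffun q).filter (fun z => rep z = w), (mTG p n q.1 q.2 z : ℤ) with hc2
  have hzero : ∑ w ∈ W, (c1 w - c2 w) • Tt w = 0 := by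
    have h1 : Tp k * Tp l = ∑ w ∈ W, c1 w • Tt w := by rw [hFkEq, hFlEq]; exact hEq1
    have h2 : Tp l * Tp k = ∑ w ∈ W, c2 w • Tt w := by rw [hFlEq, hFkEq]; exact hEq2
    calc ∑ w ∈ W, (c1 w - c2 w) • Tt w
        = ∑ w ∈ W, (c1 w • Tt w - c2 w • Tt w) := by
          refine Finset.sum_congr rfl (fun w _ => ?_); rw [sub_smul]
      _ = ∑ w ∈ W, c1 w • Tt w - ∑ w ∈ W, c2 w • Tt w := Finset.sum_sub_distrib _ _
      _ = Tp k * Tp l - Tp l * Tp k := by rw [h1, h2]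
      _ = 0 := by rw [hcomm, sub_self]
  have hcoeff := hfree W hWdel hWinj (fun w => c1 w - c2 w) hzero
  -- pick the distinguished representatives
  obtain ⟨x₀, hx₀F, hx₀c⟩ := hFk3 (deltaEl p n k) deltaEl_mem_DeltaTval
  obtain ⟨y₀, hy₀F, hy₀c⟩ := hFl3 (d0El p n l) d0El_mem_DeltaTval
  have hq₀ : ((x₀, y₀) : HkEl p n × HkEl p n) ∈ Fk ×ˢ Fl :=
    Finset.mem_product.mpr ⟨hx₀F, hy₀F⟩
  have hmζ : mTG p n x₀ y₀ (zetaEl p n k l) ≠ 0 :=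
    mTG_ne_zero (hFl1 y₀ hy₀F) rfl hx₀c hy₀c
  obtain ⟨zs, hzsF, hzsc⟩ := (hFfun (x₀, y₀) (hFkD _ hx₀F) (hFlD _ hy₀F)).2.2.1
    (zetaEl p n k l) zetaEl_mem_DeltaT hmζ
  have hzsZF : zs ∈ ZF := hsub1 (Finset.mem_biUnion.mpr ⟨(x₀, y₀), hq₀, hzsF⟩)
  set w₀ : HkEl p n := rep zs with hw₀
  have hw₀W : w₀ ∈ W := hrep_memW zs hzsZF
  have hw₀c : tdcG p n w₀ = tdcG p n (zetaEl p n k l) := by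
    rw [hw₀, (hrep_spec zs hzsZF).2, hzsc]
  -- the `T(p^l) T(p^k)` coefficient vanishes
  have hc2w₀ : c2 w₀ = 0 := by
    rw [hc2]
    refine Finset.sum_eq_zero (fun q hq => ?_)
    refine Finset.sum_eq_zero (fun z hz => ?_)
    obtain ⟨hq1, hq2⟩ := Finset.mem_product.mp hq
    obtain ⟨hzF, hzw⟩ := Finset.mem_filter.mp hz
    have hzZF : z ∈ ZF := hsub2 (Finset.mem_biUnion.mpr ⟨q, hq, hzF⟩)
    have htd : tdcG p n z = tdcG p n (zetaEl p n k l) := by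
      rw [← hw₀c, ← hzw, (hrep_spec z hzZF).2]
    have := mTG_zero_of_class hk hkl (hFl1 _ hq1) (hFk1 _ hq2) htd
    rw [this]
    simp
  -- hence so does the `T(p^k) T(p^l)` coefficient
  have hc1w₀ : c1 w₀ = 0 := by
    have := hcoeff w₀ hw₀W
    simp only [hc2w₀, sub_zero] at this
    exact this
  -- extract the single positive term
  have hterm : ∑ z ∈ (Ffun (x₀, y₀)).filter (fun z => rep z = w₀),
      (mTG p n x₀ y₀ z : ℤ) = 0 := by
    have hnonneg : ∀ q ∈ Fk ×ˢ Fl, 0 ≤ ∑ z ∈ (Ffun q).filter (fun z => rep z = w₀),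
        (mTG p n q.1 q.2 z : ℤ) :=
      fun q _ => Finset.sum_nonneg (fun z _ => Int.natCast_nonneg _)
    have := (Finset.sum_eq_zero_iff_of_nonneg hnonneg).mp hc1w₀ (x₀, y₀) hq₀
    exact this
  have hzs_filter : zs ∈ (Ffun (x₀, y₀)).filter (fun z => rep z = w₀) :=
    Finset.mem_filter.mpr ⟨hzsF, rfl⟩
  have hzsval : (mTG p n x₀ y₀ zs : ℤ) = 0 := by
    have hnonneg : ∀ z ∈ (Ffun (x₀, y₀)).filter (fun z => rep z = w₀),
        0 ≤ (mTG p n x₀ y₀ z : ℤ) := fun z _ => Int.natCast_nonneg _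
    exact (Finset.sum_eq_zero_iff_of_nonneg hnonneg).mp hterm zs hzs_filter
  have hne : mTG p n x₀ y₀ zs ≠ 0 := mTG_ne_zero (hFl1 y₀ hy₀F) hzsc hx₀c hy₀c
  exact hne (by exact_mod_cast hzsval)
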